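/- In SL^{n,m}, the derived subalgebra [SL^{n,m}, SL^{n,m}] equals the nilradical L^{n,m} = span{x_1,...,x_n,y_1,...,y_m}; in particular (SL^{n,m})^2 is nilpotent, and SL^{n,m} is solvable but not nilpotent. -/
import Mathlib


namespace SolvableModelFiliform

/-- Index type of `SL^{n,m}`: `x`-indices, then `t`-indices, then `y`-indices (0-based). -/
abbrev Idx (n m : ℕ) := Fin n ⊕ (Fin 3 ⊕ Fin m)

/-- Underlying vector space over ℂ. -/
abbrev V (n m : ℕ) := Idx n m →₀ ℂ

/-- `X n m k` is the basis vector `x_k` (1-based), or `0` if out of range. -/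
noncomputable def X (n m k : ℕ) : V n m :=
  if h : 1 ≤ k ∧ k ≤ n then Finsupp.single (Sum.inl ⟨k - 1, by omega⟩) 1 else 0

/-- `T n m s` is the basis vector `t_s` (`s ∈ {1,2,3}`), or `0` if out of range. -/
noncomputable def T (n m s : ℕ) : V n m :=
  if h : 1 ≤ s ∧ s ≤ 3 then Finsupp.single (Sum.inr (Sum.inl ⟨s - 1, by omega⟩)) 1 else 0

/-- `Y n m k` is the basis vector `y_k` (1-based), or `0` if out of range. -/
noncomputable def Y (n m k : ℕ) : V n m :=
  if h : 1 ≤ k ∧ k ≤ m then Finsupp.single (Sum.inr (Sum.inr ⟨k - 1, by omega⟩)) 1 else 0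

/-- Structure constants of `SL^{n,m}`:
`[x_1,x_i] = x_{i+1}` (2 ≤ i ≤ n-1), `[x_1,y_j] = y_{j+1}` (1 ≤ j ≤ m-1),
`[t_1,x_i] = i x_i`, `[t_1,y_j] = j y_j`, `[t_2,x_i] = x_i` (2 ≤ i ≤ n),
`[t_3,y_j] = y_j`, extended skew-symmetrically. -/
noncomputable def c (n m : ℕ) : Idx n m → Idx n m → V n m
  | Sum.inl i, Sum.inl j =>
      if i.val = 0 ∧ 1 ≤ j.val then X n m (j.val + 2)
      else if j.val = 0 ∧ 1 ≤ i.val then -X n m (i.val + 2) else 0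
  | Sum.inl i, Sum.inr (Sum.inr j) => if i.val = 0 then Y n m (j.val + 2) else 0
  | Sum.inr (Sum.inr j), Sum.inl i => if i.val = 0 then -Y n m (j.val + 2) else 0
  | Sum.inr (Sum.inl s), Sum.inl i =>
      if s.val = 0 then ((i.val + 1 : ℕ) : ℂ) • X n m (i.val + 1)
      else if s.val = 1 ∧ 1 ≤ i.val then X n m (i.val + 1) else 0
  | Sum.inl i, Sum.inr (Sum.inl s) =>
      -(if s.val = 0 then ((i.val + 1 : ℕ) : ℂ) • X n m (i.val + 1)
        else if s.val = 1 ∧ 1 ≤ i.val then X n m (i.val + 1) else 0)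
  | Sum.inr (Sum.inl s), Sum.inr (Sum.inr j) =>
      if s.val = 0 then ((j.val + 1 : ℕ) : ℂ) • Y n m (j.val + 1)
      else if s.val = 2 then Y n m (j.val + 1) else 0
  | Sum.inr (Sum.inr j), Sum.inr (Sum.inl s) =>
      -(if s.val = 0 then ((j.val + 1 : ℕ) : ℂ) • Y n m (j.val + 1)
        else if s.val = 2 then Y n m (j.val + 1) else 0)
  | Sum.inr (Sum.inl _), Sum.inr (Sum.inl _) => 0
  | Sum.inr (Sum.inr _), Sum.inr (Sum.inr _) => 0

/-- The bracket of `SL^{n,m}`, as a bilinear map. -/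
noncomputable def brL (n m : ℕ) : V n m →ₗ[ℂ] V n m →ₗ[ℂ] V n m :=
  Finsupp.lsum ℂ (fun a =>
    LinearMap.toSpanSingleton ℂ (V n m →ₗ[ℂ] V n m)
      (Finsupp.lsum ℂ (fun b => LinearMap.toSpanSingleton ℂ (V n m) (c n m a b))))

/-- The bracket. -/
noncomputable def br (n m : ℕ) (u v : V n m) : V n m := brL n m u v

/-- Parity of the basis indices (`x`'s and `t`'s even, `y`'s odd). -/
def par (n m : ℕ) : Idx n m → ZMod 2 :=
  Sum.elim (fun _ => 0) (Sum.elim (fun _ => 0) (fun _ => 1))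

/-- `u` is homogeneous of degree `s`. -/
def IsHomog (n m : ℕ) (u : V n m) (s : ZMod 2) : Prop :=
  ∀ a ∈ u.support, par n m a = s

/-- An even superderivation: parity-preserving and `D[u,v] = [Du,v] + [u,Dv]`. -/
def IsEvenDer (n m : ℕ) (D : Module.End ℂ (V n m)) : Prop :=
  (∀ (u : V n m) (s : ZMod 2), IsHomog n m u s → IsHomog n m (D u) s) ∧
  (∀ u v : V n m, D (br n m u v) = br n m (D u) v + br n m u (D v))

/-- An odd superderivation: parity-reversing and
`D[u,v] = [Du,v] + (-1)^{|u|}[u,Dv]` for homogeneous `u`. -/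
def IsOddDer (n m : ℕ) (D : Module.End ℂ (V n m)) : Prop :=
  (∀ (u : V n m) (s : ZMod 2), IsHomog n m u s → IsHomog n m (D u) (s + 1)) ∧
  (∀ (u v : V n m) (su : ZMod 2), IsHomog n m u su →
    D (br n m u v) = br n m (D u) v + ((-1 : ℂ) ^ su.val) • br n m u (D v))

/-- The derived subalgebra `[SL^{n,m}, SL^{n,m}]`. -/
noncomputable def derSub (n m : ℕ) : Submodule ℂ (V n m) :=
  Submodule.span ℂ {z | ∃ u v : V n m, z = br n m u v}

/-- Derived series. -/
noncomputable def ds (n m : ℕ) : ℕ → Submodule ℂ (V n m)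
  | 0 => ⊤
  | k + 1 => Submodule.span ℂ {z | ∃ u ∈ ds n m k, ∃ v ∈ ds n m k, z = br n m u v}

/-- Lower central series of `SL^{n,m}`. -/
noncomputable def lcs (n m : ℕ) : ℕ → Submodule ℂ (V n m)
  | 0 => ⊤
  | k + 1 => Submodule.span ℂ {z | ∃ u ∈ lcs n m k, ∃ v : V n m, z = br n m u v}

/-- Lower central series of the derived subalgebra `(SL^{n,m})^2`. -/
noncomputable def lcsDer (n m : ℕ) : ℕ → Submodule ℂ (V n m)
  | 0 => derSub n m
  | k + 1 => Submodule.span ℂ {z | ∃ u ∈ lcsDer n m k, ∃ v ∈ derSub n m, z = br n m u v}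

lemma br_def (n m : ℕ) (u v : V n m) :
    br n m u v = u.sum fun a α => v.sum fun b β => (α * β) • c n m a b := by
  simp [br, brL, Finsupp.lsum_apply, Finsupp.sum, LinearMap.toSpanSingleton_apply,
    Finset.sum_apply', LinearMap.smul_apply, Finset.smul_sum, smul_smul, mul_comm]

lemma br_single (n m : ℕ) (a b : Idx n m) (α β : ℂ) :
    br n m (Finsupp.single a α) (Finsupp.single b β) = (α * β) • c n m a b := by
  rw [br_def, Finsupp.sum_single_index, Finsupp.sum_single_index] <;> simp

/-- weight -/
def w {n m : ℕ} : Idx n m → ℕ :=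
  Sum.elim (fun i => i.val + 1) (Sum.elim (fun _ => 0) (fun j => j.val + 1))

/-- weight filtration -/
noncomputable def W (n m k : ℕ) : Submodule ℂ (V n m) where
  carrier := {u | ∀ a ∈ u.support, k ≤ w a}
  zero_mem' := by simp
  add_mem' := by
    intro u v hu hv a ha
    have := Finsupp.support_add ha
    rcases Finset.mem_union.1 this with h | h
    · exact hu a h
    · exact hv a h
  smul_mem' := by
    intro r u hu a ha
    exact hu a (Finsupp.support_smul ha)

lemma W_mono (n m : ℕ) {j k : ℕ} (h : j ≤ k) : W n m k ≤ W n m j :=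
  fun u hu a ha => le_trans h (hu a ha)

lemma X_mem_W (n m k j : ℕ) (h : j ≤ k) : X n m k ∈ W n m j := by
  unfold X
  split
  · rename_i hk
    intro a ha
    have := Finsupp.support_single_subset ha
    simp only [Finset.mem_singleton] at this
    subst this
    simp [w]; omega
  · exact zero_mem _

lemma Y_mem_W (n m k j : ℕ) (h : j ≤ k) : Y n m k ∈ W n m j := by
  unfold Y
  split
  · rename_i hk
    intro a ha
    have := Finsupp.support_single_subset ha
    simp only [Finset.mem_singleton] at this
    subst this
    simp [w]; omega
  · exact zero_mem _

lemma c_mem_W (n m : ℕ) (a b : Idx n m) : c n m a b ∈ W n m (max (w a + w b) 1) := by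
  rcases a with i | s | j <;> rcases b with i' | s' | j' <;>
    simp only [c, w, Sum.elim_inl, Sum.elim_inr] <;>
    (try split_ifs) <;>
    first
      | exact zero_mem _
      | exact neg_mem (zero_mem _)
      | (apply neg_mem; first
          | (apply Submodule.smul_mem; apply X_mem_W; omega)
          | (apply Submodule.smul_mem; apply Y_mem_W; omega)
          | (apply X_mem_W; omega)
          | (apply Y_mem_W; omega))
      | (apply Submodule.smul_mem; first
          | (apply X_mem_W; omega) | (apply Y_mem_W; omega))
      | (apply X_mem_W; omega)
      | (apply Y_mem_W; omega)

lemma br_mem_W (n m p q : ℕ) {u v : V n m} (hu : u ∈ W n m p) (hv : v ∈ W n m q) :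
    br n m u v ∈ W n m (max (p + q) 1) := by
  rw [br_def]
  apply Submodule.sum_mem
  intro a ha
  apply Submodule.sum_mem
  intro b hb
  apply Submodule.smul_mem
  refine W_mono n m ?_ (c_mem_W n m a b)
  have h1 := hu a ha
  have h2 := hv b hb
  omega

lemma W_one_eq (n m : ℕ) :
    W n m 1 = Submodule.span ℂ
      ({v | ∃ s : ℕ, 1 ≤ s ∧ s ≤ n ∧ v = X n m s} ∪
       {v | ∃ s : ℕ, 1 ≤ s ∧ s ≤ m ∧ v = Y n m s}) := by
  apply le_antisymm
  · intro u hu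
    have hrep : u = u.sum fun a α => Finsupp.single a α := (Finsupp.sum_single u).symm
    rw [hrep]
    apply Submodule.sum_mem
    intro a ha
    have hw := hu a ha
    show Finsupp.single a (u a) ∈ _
    rcases a with i | s | j
    · have hi := i.isLt
      have hfin : (⟨i.val + 1 - 1, by omega⟩ : Fin n) = i := by ext; simp
      have hx : (Finsupp.single (Sum.inl i : Idx n m) (u (Sum.inl i)))
          = (u (Sum.inl i)) • X n m (i.val + 1) := by
        rw [X, dif_pos ⟨by omega, by omega⟩, Finsupp.smul_single, smul_eq_mul, mul_one, hfin]
      rw [hx]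
      exact Submodule.smul_mem _ _ (Submodule.subset_span
        (Or.inl ⟨i.val + 1, by omega, by omega, rfl⟩))
    · simp [w] at hw
    · have hj := j.isLt
      have hfin : (⟨j.val + 1 - 1, by omega⟩ : Fin m) = j := by ext; simp
      have hy : (Finsupp.single (Sum.inr (Sum.inr j) : Idx n m) (u (Sum.inr (Sum.inr j))))
          = (u (Sum.inr (Sum.inr j))) • Y n m (j.val + 1) := by
        rw [Y, dif_pos ⟨by omega, by omega⟩, Finsupp.smul_single, smul_eq_mul, mul_one, hfin]
      rw [hy]
      exact Submodule.smul_mem _ _ (Submodule.subset_span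
        (Or.inr ⟨j.val + 1, by omega, by omega, rfl⟩))
  · rw [Submodule.span_le]
    rintro v (⟨s, h1, h2, rfl⟩ | ⟨s, h1, h2, rfl⟩)
    · exact X_mem_W n m s 1 h1
    · exact Y_mem_W n m s 1 h1

lemma derSub_le_W_one (n m : ℕ) : derSub n m ≤ W n m 1 := by
  rw [derSub, Submodule.span_le]
  rintro z ⟨u, v, rfl⟩
  have := br_mem_W n m 0 0 (u := u) (v := v) (fun a _ => Nat.zero_le _) (fun a _ => Nat.zero_le _)
  simpa using this

lemma W_bot (n m : ℕ) : W n m (n + m + 1) = ⊥ := by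
  rw [eq_bot_iff]
  intro u hu
  simp only [Submodule.mem_bot]
  ext a
  simp only [Finsupp.coe_zero, Pi.zero_apply]
  by_contra h
  have ha : a ∈ u.support := Finsupp.mem_support_iff.2 h
  have hw := hu a ha
  rcases a with i | s | j
  · have := i.isLt; simp [w] at hw; omega
  · simp [w] at hw
  · have := j.isLt; simp [w] at hw; omega

lemma X_mem_derSub (n m s : ℕ) (h1 : 1 ≤ s) (h2 : s ≤ n) : X n m s ∈ derSub n m := by
  have hb : br n m (T n m 1) (X n m s) = (s : ℂ) • X n m s := by
    rw [T, dif_pos ⟨le_refl 1, by omega⟩]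
    conv_lhs => rw [X, dif_pos ⟨h1, h2⟩]
    rw [br_single, one_mul, one_smul]
    show c n m (Sum.inr (Sum.inl ⟨0, by omega⟩)) (Sum.inl ⟨s - 1, by omega⟩) = _
    simp only [c]
    rw [if_true]
    have hs : s - 1 + 1 = s := by omega
    rw [hs]
  have hx : X n m s = (s : ℂ)⁻¹ • br n m (T n m 1) (X n m s) := by
    rw [hb, smul_smul, inv_mul_cancel₀ (Nat.cast_ne_zero.2 (by omega)), one_smul]
  rw [hx]
  exact Submodule.smul_mem _ _ (Submodule.subset_span ⟨_, _, rfl⟩)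

lemma Y_mem_derSub (n m s : ℕ) (h1 : 1 ≤ s) (h2 : s ≤ m) : Y n m s ∈ derSub n m := by
  have hb : br n m (T n m 1) (Y n m s) = (s : ℂ) • Y n m s := by
    rw [T, dif_pos ⟨le_refl 1, by omega⟩]
    conv_lhs => rw [Y, dif_pos ⟨h1, h2⟩]
    rw [br_single, one_mul, one_smul]
    show c n m (Sum.inr (Sum.inl ⟨0, by omega⟩)) (Sum.inr (Sum.inr ⟨s - 1, by omega⟩)) = _
    simp only [c]
    rw [if_true]
    have hs : s - 1 + 1 = s := by omega
    rw [hs]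
  have hy : Y n m s = (s : ℂ)⁻¹ • br n m (T n m 1) (Y n m s) := by
    rw [hb, smul_smul, inv_mul_cancel₀ (Nat.cast_ne_zero.2 (by omega)), one_smul]
  rw [hy]
  exact Submodule.smul_mem _ _ (Submodule.subset_span ⟨_, _, rfl⟩)

lemma derSub_eq (n m : ℕ) :
    derSub n m = Submodule.span ℂ
      ({v | ∃ s : ℕ, 1 ≤ s ∧ s ≤ n ∧ v = X n m s} ∪
       {v | ∃ s : ℕ, 1 ≤ s ∧ s ≤ m ∧ v = Y n m s}) := by
  apply le_antisymm
  · rw [← W_one_eq]; exact derSub_le_W_one n m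
  · rw [Submodule.span_le]
    rintro v (⟨s, h1, h2, rfl⟩ | ⟨s, h1, h2, rfl⟩)
    · exact X_mem_derSub n m s h1 h2
    · exact Y_mem_derSub n m s h1 h2

lemma lcsDer_le_W (n m : ℕ) : ∀ k, lcsDer n m k ≤ W n m (k + 1) := by
  intro k
  induction k with
  | zero => exact derSub_le_W_one n m
  | succ k ih =>
    rw [lcsDer, Submodule.span_le]
    rintro z ⟨u, hu, v, hv, rfl⟩
    refine W_mono n m (by omega) (br_mem_W n m (k + 1) 1 (ih hu) (derSub_le_W_one n m hv))

lemma ds_le_W (n m : ℕ) : ∀ k, ds n m (k + 1) ≤ W n m (k + 1) := by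
  intro k
  induction k with
  | zero =>
    rw [ds, Submodule.span_le]
    rintro z ⟨u, -, v, -, rfl⟩
    refine W_mono n m (by omega)
      (br_mem_W n m 0 0 (fun a _ => Nat.zero_le _) (fun a _ => Nat.zero_le _))
  | succ k ih =>
    rw [ds, Submodule.span_le]
    rintro z ⟨u, hu, v, hv, rfl⟩
    refine W_mono n m (by omega) (br_mem_W n m (k + 1) (k + 1) (ih hu) (ih hv))

lemma X_one_mem_lcs (n m : ℕ) (hn : 1 ≤ n) : ∀ K, X n m 1 ∈ lcs n m K := by
  intro K
  induction K with
  | zero => exact Submodule.mem_top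
  | succ K ih =>
    have hb : br n m (X n m 1) (T n m 1) = (-1 : ℂ) • X n m 1 := by
      conv_lhs => rw [X, dif_pos ⟨le_refl 1, hn⟩, T, dif_pos ⟨le_refl 1, by omega⟩]
      rw [br_single, one_mul, one_smul]
      show c n m (Sum.inl ⟨0, by omega⟩) (Sum.inr (Sum.inl ⟨0, by omega⟩)) = _
      simp only [c]
      rw [if_true]
      norm_num
    have hx : X n m 1 = (-1 : ℂ) • br n m (X n m 1) (T n m 1) := by
      rw [hb, smul_smul]; norm_num
    rw [hx]
    exact Submodule.smul_mem _ _ (Submodule.subset_span ⟨_, ih, _, rfl⟩)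


/-- In `SL^{n,m}` the derived subalgebra equals the nilradical
`L^{n,m} = span{x_1,…,x_n,y_1,…,y_m}`; `(SL^{n,m})^2` is nilpotent, and `SL^{n,m}` is
solvable but not nilpotent. -/
theorem SL_derived_eq_nilradical (n m : ℕ) (hn : 1 ≤ n) :
    derSub n m = Submodule.span ℂ
      ({v | ∃ s : ℕ, 1 ≤ s ∧ s ≤ n ∧ v = X n m s} ∪
       {v | ∃ s : ℕ, 1 ≤ s ∧ s ≤ m ∧ v = Y n m s}) ∧
    (∃ K : ℕ, lcsDer n m K = ⊥) ∧
    (∃ K : ℕ, ds n m K = ⊥) ∧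
    (∀ K : ℕ, lcs n m K ≠ ⊥) := by
  refine ⟨derSub_eq n m, ⟨n + m, ?_⟩, ⟨n + m + 1, ?_⟩, ?_⟩
  · rw [eq_bot_iff, ← W_bot n m]
    exact lcsDer_le_W n m (n + m)
  · rw [eq_bot_iff, ← W_bot n m]
    exact ds_le_W n m (n + m)
  · intro K h
    have hmem := X_one_mem_lcs n m hn K
    rw [h, Submodule.mem_bot] at hmem
    have hne : X n m 1 ≠ 0 := by
      rw [X, dif_pos ⟨le_refl 1, hn⟩]
      simp [Finsupp.single_eq_zero]
    exact hne hmem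

end SolvableModelFiliform
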